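/- Consider the coordination game where φ ∈ {0, π/4} and ψ ∈ {−π/8, π/8} are independent uniform, and the players win iff they play opposite actions, except when (φ,ψ) = (π/4, −π/8) when they must play equal actions. In the quantum strategy where the players share the singlet state η = (1/√2)(|01⟩ − |10⟩), player A measures in the rotated basis with angle θ₁ = φ, player B with angle θ₂ = ψ, and each plays the observed outcome, the winning probability equals cos²(π/8), which is strictly greater than 3/4. -/

import Mathlib

open Matrix Kronecker Real

/-- `|v⟩⟨v|`, the rank-one operator associated to a vector `v`. -/
noncomputable def ketbra {d : Type*} [Fintype d] (v : d → ℂ) : Matrix d d ℂ :=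
  vecMulVec v (star v)

/-- The singlet state vector `η = (1/√2)(|01⟩ − |10⟩)` in ℂ²⊗ℂ². -/
noncomputable def singlet : Fin 2 × Fin 2 → ℂ := fun p =>
  (1 / Real.sqrt 2 : ℝ) *
    ((![1, 0] : Fin 2 → ℂ) p.1 * (![0, 1] : Fin 2 → ℂ) p.2 -
     (![0, 1] : Fin 2 → ℂ) p.1 * (![1, 0] : Fin 2 → ℂ) p.2)

/-- Rotated basis vectors `m₀(θ) = cos θ |0⟩ + sin θ |1⟩`,
`m₁(θ) = −sin θ |0⟩ + cos θ |1⟩`. -/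
noncomputable def mvec (i : Fin 2) (θ : ℝ) : Fin 2 → ℂ :=
  if i = 0 then ![(Real.cos θ : ℂ), (Real.sin θ : ℂ)]
  else ![(-Real.sin θ : ℂ), (Real.cos θ : ℂ)]

/-- Probability of joint outcome `(i,j)` measuring the singlet in rotated bases. -/
noncomputable def pOutcome (θ₁ θ₂ : ℝ) (i j : Fin 2) : ℂ :=
  ((ketbra (mvec i θ₁) ⊗ₖ ketbra (mvec j θ₂)) * ketbra singlet).trace

/-- A's measurement angle for state `φ ∈ {0, π/4}`. -/
noncomputable def φval : Fin 2 → ℝ := ![0, π / 4]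
/-- B's measurement angle for state `ψ ∈ {−π/8, π/8}`. -/
noncomputable def ψval : Fin 2 → ℝ := ![-(π / 8), π / 8]

/-- Winning probability of the quantum strategy: each player measures at the
angle given by their state and plays the observed outcome; they win iff the
outcomes are opposite, except on the state pair `(π/4, −π/8)` (indices `(1,0)`)
where they must be equal. -/
noncomputable def quantumWinProb : ℂ :=
  (1 / 4 : ℂ) * ∑ φ : Fin 2, ∑ ψ : Fin 2,
    if φ = 1 ∧ ψ = 0 then
      pOutcome (φval φ) (ψval ψ) 0 0 + pOutcome (φval φ) (ψval ψ) 1 1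
    else
      pOutcome (φval φ) (ψval ψ) 0 1 + pOutcome (φval φ) (ψval ψ) 1 0

lemma hs : Real.sqrt 2 ^ 2 = 2 := Real.sq_sqrt (by norm_num)

lemma p01 (θ₁ θ₂ : ℝ) : pOutcome θ₁ θ₂ 0 1 = ((1/2) * Real.cos (θ₂-θ₁)^2 : ℝ) := by
  simp only [pOutcome, ketbra, Matrix.trace, Matrix.diag, Matrix.mul_apply, kroneckerMap_apply,
    vecMulVec_apply]
  simp [pOutcome, ketbra, mvec, singlet, Matrix.trace, Matrix.mul_apply, Matrix.diag,
    vecMulVec_apply, Fintype.sum_prod_type, Fin.sum_univ_succ, Complex.ext_iff,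
    ← Complex.ofReal_cos, ← Complex.ofReal_sin, Real.cos_sub, ← Complex.ofReal_mul,
    ← Complex.ofReal_pow, ← Complex.ofReal_add, ← Complex.ofReal_ofNat]
  ring_nf
  linear_combination (Real.cos θ₁ * Real.cos θ₂ * Real.sin θ₁ * Real.sin θ₂ * (1/2)
    + Real.cos θ₁^2 * Real.cos θ₂^2 * (1/4) + Real.sin θ₁^2 * Real.sin θ₂^2 * (1/4)) * hs

lemma p10 (θ₁ θ₂ : ℝ) : pOutcome θ₁ θ₂ 1 0 = ((1/2) * Real.cos (θ₂-θ₁)^2 : ℝ) := by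
  simp only [pOutcome, ketbra, Matrix.trace, Matrix.diag, Matrix.mul_apply, kroneckerMap_apply,
    vecMulVec_apply]
  simp [pOutcome, ketbra, mvec, singlet, Matrix.trace, Matrix.mul_apply, Matrix.diag,
    vecMulVec_apply, Fintype.sum_prod_type, Fin.sum_univ_succ, Complex.ext_iff,
    ← Complex.ofReal_cos, ← Complex.ofReal_sin, Real.cos_sub, ← Complex.ofReal_mul,
    ← Complex.ofReal_pow, ← Complex.ofReal_add, ← Complex.ofReal_ofNat,
    ← Complex.ofReal_neg]
  ring_nf
  linear_combination (Real.cos θ₁ * Real.cos θ₂ * Real.sin θ₁ * Real.sin θ₂ * (1/2)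
    + Real.cos θ₁^2 * Real.cos θ₂^2 * (1/4) + Real.sin θ₁^2 * Real.sin θ₂^2 * (1/4)) * hs

lemma p00 (θ₁ θ₂ : ℝ) : pOutcome θ₁ θ₂ 0 0 = ((1/2) * Real.sin (θ₂-θ₁)^2 : ℝ) := by
  simp only [pOutcome, ketbra, Matrix.trace, Matrix.diag, Matrix.mul_apply, kroneckerMap_apply,
    vecMulVec_apply]
  simp [pOutcome, ketbra, mvec, singlet, Matrix.trace, Matrix.mul_apply, Matrix.diag,
    vecMulVec_apply, Fintype.sum_prod_type, Fin.sum_univ_succ, Complex.ext_iff,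
    ← Complex.ofReal_cos, ← Complex.ofReal_sin, Real.sin_sub, ← Complex.ofReal_mul,
    ← Complex.ofReal_pow, ← Complex.ofReal_add, ← Complex.ofReal_sub,
    ← Complex.ofReal_ofNat, ← Complex.ofReal_neg]
  ring_nf
  linear_combination (-(Real.cos θ₁ * Real.cos θ₂ * Real.sin θ₁ * Real.sin θ₂ * (1/2))
    + Real.sin θ₂^2 * Real.cos θ₁^2 * (1/4) + Real.cos θ₂^2 * Real.sin θ₁^2 * (1/4)) * hs

lemma p11 (θ₁ θ₂ : ℝ) : pOutcome θ₁ θ₂ 1 1 = ((1/2) * Real.sin (θ₂-θ₁)^2 : ℝ) := by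
  simp only [pOutcome, ketbra, Matrix.trace, Matrix.diag, Matrix.mul_apply, kroneckerMap_apply,
    vecMulVec_apply]
  simp [pOutcome, ketbra, mvec, singlet, Matrix.trace, Matrix.mul_apply, Matrix.diag,
    vecMulVec_apply, Fintype.sum_prod_type, Fin.sum_univ_succ, Complex.ext_iff,
    ← Complex.ofReal_cos, ← Complex.ofReal_sin, Real.sin_sub, ← Complex.ofReal_mul,
    ← Complex.ofReal_pow, ← Complex.ofReal_add, ← Complex.ofReal_sub,
    ← Complex.ofReal_ofNat, ← Complex.ofReal_neg]
  ring_nf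
  linear_combination (-(Real.cos θ₁ * Real.cos θ₂ * Real.sin θ₁ * Real.sin θ₂ * (1/2))
    + Real.sin θ₂^2 * Real.cos θ₁^2 * (1/4) + Real.cos θ₂^2 * Real.sin θ₁^2 * (1/4)) * hs


/-- The quantum strategy wins with probability `cos²(π/8) > 3/4`. -/
theorem quantum_win_prob :
    quantumWinProb = (Real.cos (π / 8) ^ 2 : ℝ) ∧
    (3 / 4 : ℝ) < Real.cos (π / 8) ^ 2 := by
  constructor
  · rw [quantumWinProb]
    simp only [Fin.sum_univ_succ, Fin.sum_univ_zero, p00, p01, p10, p11]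
    simp only [Fin.succ_zero_eq_one, φval, ψval, Matrix.cons_val_zero, Matrix.cons_val_one, Matrix.head_cons,
      show ((0:Fin 2) = 1 ∧ (0:Fin 2) = 0) = False by simp,
      show ((0:Fin 2) = 1 ∧ (1:Fin 2) = 0) = False by simp,
      show ((1:Fin 2) = 1 ∧ (0:Fin 2) = 0) = True by simp,
      show ((1:Fin 2) = 1 ∧ (1:Fin 2) = 0) = False by simp, if_true, if_false]
    rw [show -(π/8) - 0 = -(π/8) by ring, show π/8 - 0 = π/8 by ring,
      show -(π/8) - π/4 = -(π/2 - π/8) by ring, show π/8 - π/4 = -(π/8) by ring,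
      Real.cos_neg, Real.cos_neg, Real.sin_neg]
    simp only [show ((0:Fin 2) = 1) = False by simp, show ((1:Fin 2) = 0) = False by simp,
      true_and, and_true, and_self, false_and, and_false, if_true, if_false,
      Real.sin_neg, Real.sin_pi_div_two_sub, neg_sq]
    norm_cast
    push_cast
    ring
  · have h8 : Real.cos (π/8) ^ 2 = (2 + Real.sqrt 2) / 4 := by
      have := Real.cos_sq (π/8)
      rw [show 2 * (π/8) = π/4 by ring, Real.cos_pi_div_four] at this
      rw [this]; ring
    rw [h8]
    nlinarith [hs, Real.sqrt_nonneg 2]
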